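/- Let α be badly approximable with constant c_α > 0. Then there is a constant C > 0, depending only on c_α, such that for every integer ℓ ≥ 0, ∑_{k=2^ℓ}^{2^{ℓ+1}} ‖kα‖^{−2} ≤ C · 2^{2ℓ}. -/

import Mathlib

open MeasureTheory Filter

/-- `distNearestInt t` is the distance `‖t‖` from a real number `t` to the nearest
integer. -/
noncomputable def distNearestInt (t : ℝ) : ℝ := |t - round t|

/-- If `α` is badly approximable with constant `c_α > 0`, then there is
`C > 0` (depending only on `c_α`) such that for every `ℓ ≥ 0`,
`∑_{k=2^ℓ}^{2^{ℓ+1}} ‖kα‖^{−2} ≤ C · 2^{2ℓ}`. -/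
theorem badly_approximable_dyadic_sum
    (α cα : ℝ) (hcα : 0 < cα)
    (hα : ∀ q : ℕ, 0 < q → cα / q ≤ distNearestInt (q * α)) :
    ∃ C > 0, ∀ ℓ : ℕ,
      ∑ k ∈ Finset.Icc (2 ^ ℓ : ℕ) (2 ^ (ℓ + 1)), 1 / distNearestInt ((k : ℝ) * α) ^ 2
        ≤ C * 2 ^ (2 * ℓ) := by
  have hsum : Summable (fun n : ℕ => 1 / (n : ℝ) ^ 2) :=
    Real.summable_one_div_nat_pow.mpr one_lt_two
  set T : ℝ := ∑' n : ℕ, 1 / (n : ℝ) ^ 2 with hTdef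
  have hT0 : 0 < T := by
    have h1 : 1 / ((1:ℕ) : ℝ) ^ 2 ≤ T := Summable.le_tsum hsum 1 (fun j _ => by positivity)
    norm_num at h1
    linarith
  refine ⟨8 * T / cα ^ 2, by positivity, fun ℓ => ?_⟩
  set N : ℕ := 2 ^ ℓ with hNdef
  have hN0 : 0 < N := Nat.pow_pos (by norm_num)
  have hNR : (0 : ℝ) < N := by exact_mod_cast hN0
  set u : ℝ := cα / (2 * N) with hudef
  have hu0 : 0 < u := by positivity
  set d : ℕ → ℝ := fun k => distNearestInt ((k : ℝ) * α) with hddef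
  set f : ℕ → ℕ := fun k => ⌊d k / u⌋₊ with hfdef
  set s : Finset ℕ := Finset.Icc N (2 ^ (ℓ + 1)) with hsdef
  have h2N : (2 : ℕ) ^ (ℓ + 1) = 2 * N := by rw [hNdef, pow_succ]; ring
  -- basic facts for k ∈ s
  have hmem : ∀ k ∈ s, N ≤ k ∧ k ≤ 2 * N := by
    intro k hk
    rw [hsdef, Finset.mem_Icc, h2N] at hk
    exact hk
  have hdlb : ∀ k ∈ s, u ≤ d k := by
    intro k hk
    obtain ⟨hk1, hk2⟩ := hmem k hk
    have hkpos : 0 < k := lt_of_lt_of_le hN0 hk1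
    have h1 : cα / k ≤ d k := hα k hkpos
    have h2 : u ≤ cα / k := by
      rw [hudef]
      apply div_le_div_of_nonneg_left hcα.le (by exact_mod_cast hkpos)
      exact_mod_cast hk2
    linarith
  have hd0 : ∀ k ∈ s, 0 < d k := fun k hk => lt_of_lt_of_le hu0 (hdlb k hk)
  have hf1 : ∀ k ∈ s, 1 ≤ f k := by
    intro k hk
    rw [hfdef]
    apply Nat.le_floor
    rw [Nat.cast_one, le_div_iff₀ hu0, one_mul]
    exact hdlb k hk
  have hflb : ∀ k ∈ s, (f k : ℝ) * u ≤ d k := by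
    intro k hk
    have := Nat.floor_le (div_nonneg (hd0 k hk).le hu0.le)
    rw [hfdef]
    calc (⌊d k / u⌋₊ : ℝ) * u ≤ (d k / u) * u := by
          apply mul_le_mul_of_nonneg_right this hu0.le
      _ = d k := div_mul_cancel₀ _ hu0.ne'
  have hfub : ∀ k ∈ s, d k < ((f k : ℝ) + 1) * u := by
    intro k hk
    have := Nat.lt_floor_add_one (d k / u)
    rw [hfdef]
    calc d k = (d k / u) * u := (div_mul_cancel₀ _ hu0.ne').symm
      _ < ((⌊d k / u⌋₊ : ℝ) + 1) * u := by
          apply mul_lt_mul_of_pos_right this hu0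
  -- signed distance
  set sg : ℕ → ℝ := fun k => (k : ℝ) * α - round ((k : ℝ) * α) with hsgdef
  have hdsg : ∀ k, d k = |sg k| := fun k => rfl
  -- pair contradiction
  have pair : ∀ k k', k ∈ s → k' ∈ s → k < k' → f k = f k' →
      ((0 ≤ sg k ∧ 0 ≤ sg k') ∨ (sg k < 0 ∧ sg k' < 0)) → False := by
    intro k k' hk hk' hlt hff hsgn
    obtain ⟨hk1, hk2⟩ := hmem k hk
    obtain ⟨hk'1, hk'2⟩ := hmem k' hk'
    set q : ℕ := k' - k with hqdef
    have hq0 : 0 < q := Nat.sub_pos_of_lt hlt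
    have hqN : q ≤ N := by omega
    have hqcast : (q : ℝ) = (k' : ℝ) - k := by
      rw [hqdef]; push_cast [Nat.cast_sub hlt.le]; ring
    -- badly approximable lower bound
    have hlow : cα / q ≤ distNearestInt ((q : ℝ) * α) := hα q hq0
    -- upper bound via round_le
    have hup : distNearestInt ((q : ℝ) * α) ≤ |sg k' - sg k| := by
      have := round_le ((q : ℝ) * α) (round ((k' : ℝ) * α) - round ((k : ℝ) * α))
      rw [distNearestInt]
      refine this.trans_eq ?_
      rw [hsgdef]
      push_cast
      rw [hqcast]
      ring_nf
    -- |sg k' - sg k| = |d k' - d k|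
    have habs : |sg k' - sg k| = |d k' - d k| := by
      rcases hsgn with ⟨h1, h2⟩ | ⟨h1, h2⟩
      · rw [hdsg, hdsg, abs_of_nonneg h1, abs_of_nonneg h2]
      · rw [hdsg, hdsg, abs_of_neg h1, abs_of_neg h2, ← abs_neg]; ring_nf
    -- |d k' - d k| < u
    have hsmall : |d k' - d k| < u := by
      rw [abs_lt]
      have a1 := hflb k hk
      have a2 := hfub k hk
      have a3 := hflb k' hk'
      have a4 := hfub k' hk'
      rw [hff] at a1 a2
      constructor <;> nlinarith
    -- contradiction: cα/q ≥ cα/N > cα/(2N) = u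
    have hqR : (0 : ℝ) < q := by exact_mod_cast hq0
    have hgt : u < cα / q := by
      rw [hudef]
      apply div_lt_div_of_pos_left hcα hqR
      have : (q : ℝ) ≤ N := by exact_mod_cast hqN
      linarith
    have := hlow.trans (hup.trans_eq habs |>.trans_lt hsmall |>.le)
    linarith
  -- each fiber has at most 2 elements
  have key : ∀ j, (s.filter (fun k => f k = j)).card ≤ 2 := by
    intro j
    by_contra hcon
    push_neg at hcon
    obtain ⟨a, b, c, ha, hb, hc, hab, hac, hbc⟩ := Finset.two_lt_card_iff.mp hcon
    rw [Finset.mem_filter] at ha hb hc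
    -- among a b c two have same sign of sg; derive contradiction
    have contra : ∀ x y, x ∈ s → f x = j → y ∈ s → f y = j → x ≠ y →
        ((0 ≤ sg x ∧ 0 ≤ sg y) ∨ (sg x < 0 ∧ sg y < 0)) → False := by
      intro x y hx hfx hy hfy hxy hsgn
      rcases hxy.lt_or_gt with h | h
      · exact pair x y hx hy h (hfx.trans hfy.symm) hsgn
      · rcases hsgn with ⟨h1, h2⟩ | ⟨h1, h2⟩
        · exact pair y x hy hx h (hfy.trans hfx.symm) (Or.inl ⟨h2, h1⟩)
        · exact pair y x hy hx h (hfy.trans hfx.symm) (Or.inr ⟨h2, h1⟩)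
    by_cases h1 : 0 ≤ sg a <;> by_cases h2 : 0 ≤ sg b <;> by_cases h3 : 0 ≤ sg c
    · exact contra a b ha.1 ha.2 hb.1 hb.2 hab (Or.inl ⟨h1, h2⟩)
    · exact contra a b ha.1 ha.2 hb.1 hb.2 hab (Or.inl ⟨h1, h2⟩)
    · exact contra a c ha.1 ha.2 hc.1 hc.2 hac (Or.inl ⟨h1, h3⟩)
    · exact contra b c hb.1 hb.2 hc.1 hc.2 hbc (Or.inr ⟨not_le.mp h2, not_le.mp h3⟩)
    · exact contra b c hb.1 hb.2 hc.1 hc.2 hbc (Or.inl ⟨h2, h3⟩)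
    · exact contra a c ha.1 ha.2 hc.1 hc.2 hac (Or.inr ⟨not_le.mp h1, not_le.mp h3⟩)
    · exact contra a b ha.1 ha.2 hb.1 hb.2 hab (Or.inr ⟨not_le.mp h1, not_le.mp h2⟩)
    · exact contra a b ha.1 ha.2 hb.1 hb.2 hab (Or.inr ⟨not_le.mp h1, not_le.mp h2⟩)
  -- now the sum estimate
  have step1 : ∑ k ∈ s, 1 / d k ^ 2 ≤ ∑ k ∈ s, (1 / u) ^ 2 * (1 / (f k : ℝ) ^ 2) := by
    apply Finset.sum_le_sum
    intro k hk
    have hfk : (1 : ℝ) ≤ (f k : ℝ) := by exact_mod_cast hf1 k hk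
    have hfu : 0 < (f k : ℝ) * u := by positivity
    have h1 : (f k : ℝ) * u ≤ d k := hflb k hk
    have hdk := hd0 k hk
    rw [div_pow, one_pow, div_mul_div_comm, one_mul]
    rw [div_le_div_iff₀ (by positivity) (by positivity)]
    nlinarith
  have step2 : ∑ k ∈ s, (1 / (f k : ℝ) ^ 2) ≤ 2 * T := by
    have hcomp := Finset.sum_comp (fun j : ℕ => 1 / (j : ℝ) ^ 2) f (s := s)
    rw [hcomp]
    calc ∑ b ∈ s.image f, (s.filter fun a => f a = b).card • (1 / (b : ℝ) ^ 2)
        ≤ ∑ b ∈ s.image f, 2 * (1 / (b : ℝ) ^ 2) := by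
          apply Finset.sum_le_sum
          intro b _
          rw [nsmul_eq_mul]
          apply mul_le_mul_of_nonneg_right _ (by positivity)
          exact_mod_cast key b
      _ = 2 * ∑ b ∈ s.image f, (1 / (b : ℝ) ^ 2) := by rw [Finset.mul_sum]
      _ ≤ 2 * T := by
          apply mul_le_mul_of_nonneg_left _ (by norm_num)
          exact Summable.sum_le_tsum _ (fun i _ => by positivity) hsum
  have hNsq : ((N : ℝ)) ^ 2 = (2 : ℝ) ^ (2 * ℓ) := by
    rw [hNdef]
    push_cast
    rw [two_mul, pow_add]
    ring
  calc ∑ k ∈ s, 1 / d k ^ 2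
      ≤ ∑ k ∈ s, (1 / u) ^ 2 * (1 / (f k : ℝ) ^ 2) := step1
    _ = (1 / u) ^ 2 * ∑ k ∈ s, (1 / (f k : ℝ) ^ 2) := by rw [Finset.mul_sum]
    _ ≤ (1 / u) ^ 2 * (2 * T) := by
        apply mul_le_mul_of_nonneg_left step2 (by positivity)
    _ = 8 * T / cα ^ 2 * 2 ^ (2 * ℓ) := by
        rw [← hNsq, hudef]
        field_simp
        ring
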